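/- Let γ = [[a,b],[c,d]] ∈ SL₂(ℂ)\SU₂(ℂ) with isometric sphere Σ_{Ψ(γ)} in the ball model. Then: (1) 0 ∉ Σ_{Ψ(γ)}; (2) j ∈ Σ_{Ψ(γ)} iff |a|²+|c|² = 1; (3) j lies in the interior of Σ_{Ψ(γ)} iff |a|²+|c|² < 1; (4) −j ∈ Σ_{Ψ(γ)} iff |b|²+|d|² = 1; (5) −j lies in the interior iff |b|²+|d|² < 1. -/

import Mathlib

open scoped Quaternion
open Matrix

/-- Embedding of `ℂ` into the real quaternions `ℍ`. -/
noncomputable def toQ (z : ℂ) : ℍ[ℝ] := ⟨z.re, z.im, 0, 0⟩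

/-- The quaternion `j`. -/
noncomputable def jq : ℍ[ℝ] := ⟨0, 0, 1, 0⟩

/-- The map `Ψ(γ) = ḡ γ g` where `g = (1/√2)[[1,j],[j,1]]`. -/
noncomputable def Ψ (γ : Matrix (Fin 2) (Fin 2) ℂ) : Matrix (Fin 2) (Fin 2) ℍ[ℝ] :=
  ((Real.sqrt 2)⁻¹ • !![(1 : ℍ[ℝ]), -jq; -jq, 1]) * (γ.map toQ) *
    ((Real.sqrt 2)⁻¹ • !![(1 : ℍ[ℝ]), jq; jq, 1])

/-- `‖γ‖²`, the sum of the squared moduli of the entries of `γ`. -/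
noncomputable def mnorm (γ : Matrix (Fin 2) (Fin 2) ℂ) : ℝ :=
  Complex.normSq (γ 0 0) + Complex.normSq (γ 0 1) + Complex.normSq (γ 1 0) + Complex.normSq (γ 1 1)

lemma toQ_re (z : ℂ) : (toQ z).re = z.re := rfl
lemma toQ_imI (z : ℂ) : (toQ z).imI = z.im := rfl
lemma toQ_imJ (z : ℂ) : (toQ z).imJ = 0 := rfl
lemma toQ_imK (z : ℂ) : (toQ z).imK = 0 := rfl
lemma jq_re : jq.re = 0 := rfl
lemma jq_imI : jq.imI = 0 := rfl
lemma jq_imJ : jq.imJ = 1 := rfl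
lemma jq_imK : jq.imK = 0 := rfl

lemma psi10 (a b c d : ℂ) : Ψ !![a,b;c,d] 1 0 =
    (⟨(c.re+b.re)/2, (c.im-b.im)/2, (d.re-a.re)/2, (d.im+a.im)/2⟩ : ℍ[ℝ]) := by
  have h2 : (Real.sqrt 2)⁻¹ * (Real.sqrt 2)⁻¹ = 1/2 := by
    rw [← mul_inv, ← Real.sqrt_mul_self (by norm_num : (0:ℝ) ≤ 2)]; norm_num
  ext <;>
  · simp [Ψ, toQ_re, toQ_imI, toQ_imJ, toQ_imK, jq_re, jq_imI, jq_imJ, jq_imK, Matrix.mul_apply, Fin.sum_univ_two, Matrix.vecMul, Matrix.vecHead,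
      Matrix.vecTail, dotProduct, Matrix.map_apply, Matrix.smul_apply,
      Quaternion.re_mul, Quaternion.imI_mul, Quaternion.imJ_mul, Quaternion.imK_mul,
      Quaternion.re_smul, Quaternion.imI_smul, Quaternion.imJ_smul, Quaternion.imK_smul,
      smul_eq_mul]
    ring_nf
    rw [show (√2)⁻¹ ^ 2 = 1/2 by rw [sq]; exact h2]
    ring

lemma psi11 (a b c d : ℂ) : Ψ !![a,b;c,d] 1 1 =
    (⟨(a.re+d.re)/2, (d.im-a.im)/2, (c.re-b.re)/2, (c.im+b.im)/2⟩ : ℍ[ℝ]) := by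
  have h2 : (Real.sqrt 2)⁻¹ * (Real.sqrt 2)⁻¹ = 1/2 := by
    rw [← mul_inv, ← Real.sqrt_mul_self (by norm_num : (0:ℝ) ≤ 2)]; norm_num
  ext <;>
  · simp [Ψ, toQ_re, toQ_imI, toQ_imJ, toQ_imK, jq_re, jq_imI, jq_imJ, jq_imK, Matrix.mul_apply, Fin.sum_univ_two, Matrix.vecMul, Matrix.vecHead,
      Matrix.vecTail, dotProduct, Matrix.map_apply, Matrix.smul_apply,
      Quaternion.re_mul, Quaternion.imI_mul, Quaternion.imJ_mul, Quaternion.imK_mul,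
      Quaternion.re_smul, Quaternion.imI_smul, Quaternion.imJ_smul, Quaternion.imK_smul,
      smul_eq_mul]
    ring_nf
    rw [show (√2)⁻¹ ^ 2 = 1/2 by rw [sq]; exact h2]
    ring

/-- For `γ = [[a,b],[c,d]] ∈ SL₂(ℂ)\SU₂(ℂ)` with isometric sphere `Σ_{Ψ(γ)}` (center
`P = −C⁻¹A′`, radius `R = 1/|C|`) in the ball model:
(1) `0 ∉ Σ_{Ψ(γ)}`; (2) `j ∈ Σ_{Ψ(γ)}` iff `|a|²+|c|² = 1`; (3) `j` is interior to `Σ_{Ψ(γ)}`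
iff `|a|²+|c|² < 1`; (4) `−j ∈ Σ_{Ψ(γ)}` iff `|b|²+|d|² = 1`; (5) `−j` is interior iff
`|b|²+|d|² < 1`. -/
theorem stmt13 (a b c d : ℂ) (hdet : a * d - b * c = 1)
    (hsu : mnorm !![a, b; c, d] ≠ 2) :
    Quaternion.normSq ((0 : ℍ[ℝ]) - -(Ψ !![a, b; c, d] 1 0)⁻¹ * Ψ !![a, b; c, d] 1 1) ≠
      (Quaternion.normSq (Ψ !![a, b; c, d] 1 0))⁻¹ ∧
    (Quaternion.normSq (jq - -(Ψ !![a, b; c, d] 1 0)⁻¹ * Ψ !![a, b; c, d] 1 1) =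
        (Quaternion.normSq (Ψ !![a, b; c, d] 1 0))⁻¹ ↔
      Complex.normSq a + Complex.normSq c = 1) ∧
    (Quaternion.normSq (jq - -(Ψ !![a, b; c, d] 1 0)⁻¹ * Ψ !![a, b; c, d] 1 1) <
        (Quaternion.normSq (Ψ !![a, b; c, d] 1 0))⁻¹ ↔
      Complex.normSq a + Complex.normSq c < 1) ∧
    (Quaternion.normSq (-jq - -(Ψ !![a, b; c, d] 1 0)⁻¹ * Ψ !![a, b; c, d] 1 1) =
        (Quaternion.normSq (Ψ !![a, b; c, d] 1 0))⁻¹ ↔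
      Complex.normSq b + Complex.normSq d = 1) ∧
    (Quaternion.normSq (-jq - -(Ψ !![a, b; c, d] 1 0)⁻¹ * Ψ !![a, b; c, d] 1 1) <
        (Quaternion.normSq (Ψ !![a, b; c, d] 1 0))⁻¹ ↔
      Complex.normSq b + Complex.normSq d < 1) := by
  rw [psi10, psi11]
  set C : ℍ[ℝ] := ⟨(c.re+b.re)/2, (c.im-b.im)/2, (d.re-a.re)/2, (d.im+a.im)/2⟩ with hCdef
  set A' : ℍ[ℝ] := ⟨(a.re+d.re)/2, (d.im-a.im)/2, (c.re-b.re)/2, (c.im+b.im)/2⟩ with hAdef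
  -- det components
  have h1 : a.re*d.re - a.im*d.im - (b.re*c.re - b.im*c.im) = 1 := by
    have := congrArg Complex.re hdet; simpa [Complex.mul_re] using this
  have h2 : a.re*d.im + a.im*d.re - (b.re*c.im + b.im*c.re) = 0 := by
    have := congrArg Complex.im hdet; simpa [Complex.mul_im] using this
  have hmn : mnorm !![a,b;c,d] =
      a.re^2+a.im^2+b.re^2+b.im^2+c.re^2+c.im^2+d.re^2+d.im^2 := by
    simp [mnorm, Complex.normSq_apply]; ring
  have hCne : C ≠ 0 := by
    intro h
    rw [Quaternion.ext_iff] at h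
    obtain ⟨e1, e2, e3, e4⟩ := h
    simp only [hCdef, Quaternion.re_zero, Quaternion.imI_zero, Quaternion.imJ_zero,
      Quaternion.imK_zero] at e1 e2 e3 e4
    apply hsu
    rw [hmn]
    nlinarith [h1, e1, e2, e3, e4]
  have hnC : 0 < Quaternion.normSq C := lt_of_le_of_ne (Quaternion.normSq_nonneg) (Ne.symm (Quaternion.normSq_ne_zero.mpr hCne))
  have key : ∀ x : ℍ[ℝ], Quaternion.normSq (x - -C⁻¹ * A') =
      (Quaternion.normSq C)⁻¹ * Quaternion.normSq (C*x + A') := by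
    intro x
    have hx : x - -C⁻¹ * A' = C⁻¹ * (C*x + A') := by
      rw [neg_mul, sub_neg_eq_add, mul_add, ← mul_assoc, inv_mul_cancel₀ hCne, one_mul]
    rw [hx, _root_.map_mul, map_inv₀]
  have heq : ∀ t : ℝ, ((Quaternion.normSq C)⁻¹ * t = (Quaternion.normSq C)⁻¹ ↔ t = 1) := by
    intro t
    constructor
    · intro h; have := mul_left_cancel₀ (inv_ne_zero hnC.ne') (h.trans (mul_one _).symm); exact this
    · intro h; rw [h, mul_one]
  have hlt : ∀ t : ℝ, ((Quaternion.normSq C)⁻¹ * t < (Quaternion.normSq C)⁻¹ ↔ t < 1) := by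
    intro t
    rw [← mul_one (Quaternion.normSq C)⁻¹]
    constructor
    · intro h; nlinarith [inv_pos.mpr hnC]
    · intro h; nlinarith [inv_pos.mpr hnC]
  -- values
  have v0 : Quaternion.normSq (C*0 + A') = (mnorm !![a,b;c,d] + 2)/4 := by
    rw [mul_zero, zero_add, Quaternion.normSq_def', hmn, hAdef]
    simp only []
    nlinarith [h1]
  have vj : Quaternion.normSq (C*jq + A') = Complex.normSq a + Complex.normSq c := by
    have : C*jq + A' = (⟨a.re, -a.im, c.re, c.im⟩ : ℍ[ℝ]) := by
      ext <;> simp [jq_re, jq_imI, jq_imJ, jq_imK, Quaternion.re_mul, Quaternion.imI_mul,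
        Quaternion.imJ_mul, Quaternion.imK_mul] <;> simp [hCdef, hAdef] <;> ring
    rw [Quaternion.normSq_def', this]; simp [Complex.normSq_apply]; ring
  have vmj : Quaternion.normSq (C*(-jq) + A') = Complex.normSq b + Complex.normSq d := by
    have : C*(-jq) + A' = (⟨d.re, d.im, -b.re, b.im⟩ : ℍ[ℝ]) := by
      ext <;> simp [jq_re, jq_imI, jq_imJ, jq_imK, Quaternion.re_mul, Quaternion.imI_mul,
        Quaternion.imJ_mul, Quaternion.imK_mul] <;> simp [hCdef, hAdef] <;> ring
    rw [Quaternion.normSq_def', this]; simp [Complex.normSq_apply]; ring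
  refine ⟨?_, ?_, ?_, ?_, ?_⟩
  · rw [key, v0, Ne, heq]
    intro h; apply hsu; linarith
  · rw [key, vj]; exact heq _
  · rw [key, vj]; exact hlt _
  · rw [key, vmj]; exact heq _
  · rw [key, vmj]; exact hlt _
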